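/- arXiv:2310.17611 — 2 statements merged into one kernel-verified Lean document; each statement's English description precedes it below -/
import Mathlib

section
/- Let V be a finite collection of linearly independent vectors in ℝ^d. Then the partial orthogonality independence model on V satisfies the intersection axiom: if A ⫫ B | (C ∪ D) and A ⫫ C | (B ∪ D), then A ⫫ (B ∪ C) | D, for disjoint subsets A, B, C, D of V. -/
noncomputable def resid {E : Type*} [NormedAddCommGroup E] [InnerProductSpace ℝ E]
    [FiniteDimensional ℝ E] (C : Set E) (v : E) : E :=
  v - ((Submodule.span ℝ C).orthogonalProjectionOnto v : E)

section Aux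

variable {E : Type*} [NormedAddCommGroup E] [InnerProductSpace ℝ E] [FiniteDimensional ℝ E]

lemma resid_mem_orthogonal (C : Set E) (v : E) : resid C v ∈ (Submodule.span ℝ C)ᗮ :=
  Submodule.sub_starProjection_mem_orthogonal (K := Submodule.span ℝ C) v

lemma sub_resid_mem (C : Set E) (v : E) : v - resid C v ∈ Submodule.span ℝ C := by
  simp only [resid, sub_sub_cancel]
  exact ((Submodule.span ℝ C).orthogonalProjectionOnto v).2

lemma resid_eq_of {C : Set E} {v p : E} (hp : p ∈ Submodule.span ℝ C)
    (h : v - p ∈ (Submodule.span ℝ C)ᗮ) : resid C v = v - p := by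
  unfold resid
  rw [← Submodule.starProjection_apply, Submodule.eq_starProjection_of_mem_orthogonal hp h]

/-- The tower property: residualizing on `C ∪ D` is residualizing on `D`,
then on the `D`-residuals of `C`. -/
lemma resid_union (C D : Set E) (v : E) :
    resid (C ∪ D) v = resid (resid D '' C) (resid D v) := by
  set Ct : Set E := resid D '' C with hCt
  have hCt_le : Submodule.span ℝ Ct ≤ (Submodule.span ℝ D)ᗮ := by
    rw [Submodule.span_le]
    rintro _ ⟨c, _, rfl⟩
    exact resid_mem_orthogonal D c
  have hsub : Submodule.span ℝ (C ∪ D) ≤ Submodule.span ℝ Ct ⊔ Submodule.span ℝ D := by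
    rw [Submodule.span_le]
    rintro x (hx | hx)
    · have : x = resid D x + (x - resid D x) := by abel
      rw [this]
      exact Submodule.add_mem _
        (Submodule.mem_sup_left (Submodule.subset_span ⟨x, hx, rfl⟩))
        (Submodule.mem_sup_right (sub_resid_mem D x))
    · exact Submodule.mem_sup_right (Submodule.subset_span hx)
  have hp : v - resid Ct (resid D v) ∈ Submodule.span ℝ (C ∪ D) := by
    have h1 : v - resid D v ∈ Submodule.span ℝ (C ∪ D) :=
      Submodule.span_mono Set.subset_union_right (sub_resid_mem D v)
    have h2 : resid D v - resid Ct (resid D v) ∈ Submodule.span ℝ (C ∪ D) := by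
      have := sub_resid_mem Ct (resid D v)
      refine Submodule.span_le.mpr ?_ this
      rintro _ ⟨c, hc, rfl⟩
      have hc1 : c ∈ Submodule.span ℝ (C ∪ D) :=
        Submodule.subset_span (Set.mem_union_left _ hc)
      have hc2 : c - resid D c ∈ Submodule.span ℝ (C ∪ D) :=
        Submodule.span_mono Set.subset_union_right (sub_resid_mem D c)
      have : resid D c = c - (c - resid D c) := by abel
      rw [this]
      exact Submodule.sub_mem _ hc1 hc2
    have : v - resid Ct (resid D v) =
        (v - resid D v) + (resid D v - resid Ct (resid D v)) := by abel
    rw [this]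
    exact Submodule.add_mem _ h1 h2
  have horth : v - (v - resid Ct (resid D v)) ∈ (Submodule.span ℝ (C ∪ D))ᗮ := by
    have h0 : resid Ct (resid D v) ∈ (Submodule.span ℝ Ct ⊔ Submodule.span ℝ D)ᗮ := by
      rw [← Submodule.inf_orthogonal]
      refine ⟨resid_mem_orthogonal Ct _, ?_⟩
      have h1 : resid D v ∈ (Submodule.span ℝ D)ᗮ := resid_mem_orthogonal D v
      have h2 : resid D v - resid Ct (resid D v) ∈ (Submodule.span ℝ D)ᗮ :=
        hCt_le (sub_resid_mem Ct (resid D v))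
      have : resid Ct (resid D v) = resid D v - (resid D v - resid Ct (resid D v)) := by
        abel
      rw [this]
      exact Submodule.sub_mem _ h1 h2
    have : v - (v - resid Ct (resid D v)) = resid Ct (resid D v) := by abel
    rw [this]
    exact Submodule.orthogonal_le hsub h0
  have := resid_eq_of hp horth
  rw [this]
  abel

lemma inner_resid_right {S : Set E} {x : E} (hx : x ∈ (Submodule.span ℝ S)ᗮ) (b : E) :
    (inner ℝ x (resid S b) : ℝ) = inner ℝ x b := by
  have : (inner ℝ x (b - resid S b) : ℝ) = 0 :=
    (Submodule.mem_orthogonal' _ _).1 hx _ (sub_resid_mem S b)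
  rw [inner_sub_right] at this
  linarith

end Aux

/-- Partial orthogonality: `A ⫫ B | C` iff for all `a ∈ A`, `b ∈ B`, the residuals of
`a` and `b` after orthogonal projection onto the span of `C` are orthogonal. -/
def pOrth {d : ℕ} (A B C : Finset (EuclideanSpace ℝ (Fin d))) : Prop :=
  ∀ a ∈ A, ∀ b ∈ B,
    inner ℝ (resid (C : Set (EuclideanSpace ℝ (Fin d))) a)
      (resid (C : Set (EuclideanSpace ℝ (Fin d))) b) = (0 : ℝ)

noncomputable abbrev Eu (d : ℕ) := EuclideanSpace ℝ (Fin d)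

/-- For a linearly independent collection of vectors, partial orthogonality satisfies
the intersection axiom. -/
theorem partial_orthogonality_intersection {d : ℕ}
    [DecidableEq (EuclideanSpace ℝ (Fin d))]
    (V A B C D : Finset (EuclideanSpace ℝ (Fin d)))
    (hV : LinearIndependent ℝ (fun x : {x // x ∈ V} => (x : EuclideanSpace ℝ (Fin d))))
    (hA : A ⊆ V) (hB : B ⊆ V) (hC : C ⊆ V) (hD : D ⊆ V)
    (hAB : Disjoint A B) (hAC : Disjoint A C) (hAD : Disjoint A D)
    (hBC : Disjoint B C) (hBD : Disjoint B D) (hCD : Disjoint C D)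
    (h1 : pOrth A B (C ∪ D)) (h2 : pOrth A C (B ∪ D)) : pOrth A (B ∪ C) D := by
  classical
  intro a ha x hx
  set Bt : Set (Eu d) := resid (D : Set (Eu d)) '' (B : Set (Eu d)) with hBt
  set Ct : Set (Eu d) := resid (D : Set (Eu d)) '' (C : Set (Eu d)) with hCtdef
  set r₁ : Eu d := resid Ct (resid (D : Set (Eu d)) a) with hr₁
  set r₂ : Eu d := resid Bt (resid (D : Set (Eu d)) a) with hr₂
  -- r₁ is orthogonal to span (Bt ∪ Ct)
  have hr₁Ct : r₁ ∈ (Submodule.span ℝ Ct)ᗮ := resid_mem_orthogonal _ _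
  have hr₂Bt : r₂ ∈ (Submodule.span ℝ Bt)ᗮ := resid_mem_orthogonal _ _
  have hr₁Bt : r₁ ∈ (Submodule.span ℝ Bt)ᗮ := by
    rw [Submodule.mem_orthogonal']
    intro u hu
    induction hu using Submodule.span_induction with
    | mem y hy =>
      obtain ⟨b, hb, rfl⟩ := hy
      have := h1 a ha b hb
      rw [show ((C ∪ D : Finset (Eu d)) : Set (Eu d)) = (C : Set (Eu d)) ∪ (D : Set (Eu d)) by
            simp [Finset.coe_union], resid_union, resid_union] at this
      rw [← hCtdef, ← hr₁] at this
      rw [← inner_resid_right hr₁Ct (resid (D : Set (Eu d)) b)]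
      exact this
    | zero => simp
    | add y z _ _ hy hz => rw [inner_add_right, hy, hz]; ring
    | smul t y _ hy => rw [inner_smul_right, hy]; ring
  have hr₂Ct : r₂ ∈ (Submodule.span ℝ Ct)ᗮ := by
    rw [Submodule.mem_orthogonal']
    intro u hu
    induction hu using Submodule.span_induction with
    | mem y hy =>
      obtain ⟨c, hc, rfl⟩ := hy
      have := h2 a ha c hc
      rw [show ((B ∪ D : Finset (Eu d)) : Set (Eu d)) = (B : Set (Eu d)) ∪ (D : Set (Eu d)) by
            simp [Finset.coe_union], resid_union, resid_union] at this
      rw [← hBt, ← hr₂] at this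
      rw [← inner_resid_right hr₂Bt (resid (D : Set (Eu d)) c)]
      exact this
    | zero => simp
    | add y z _ _ hy hz => rw [inner_add_right, hy, hz]; ring
    | smul t y _ hy => rw [inner_smul_right, hy]; ring
  have hr₁O : r₁ ∈ (Submodule.span ℝ Bt ⊔ Submodule.span ℝ Ct)ᗮ := by
    rw [← Submodule.inf_orthogonal]; exact ⟨hr₁Bt, hr₁Ct⟩
  have hr₂O : r₂ ∈ (Submodule.span ℝ Bt ⊔ Submodule.span ℝ Ct)ᗮ := by
    rw [← Submodule.inf_orthogonal]; exact ⟨hr₂Bt, hr₂Ct⟩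
  -- r₁ = r₂
  have hdiff : r₁ - r₂ ∈ Submodule.span ℝ Bt ⊔ Submodule.span ℝ Ct := by
    have e1 : resid (D : Set (Eu d)) a - r₁ ∈ Submodule.span ℝ Ct := sub_resid_mem _ _
    have e2 : resid (D : Set (Eu d)) a - r₂ ∈ Submodule.span ℝ Bt := sub_resid_mem _ _
    have : r₁ - r₂ = (resid (D : Set (Eu d)) a - r₂) - (resid (D : Set (Eu d)) a - r₁) := by abel
    rw [this]
    exact Submodule.sub_mem _ (Submodule.mem_sup_left e2) (Submodule.mem_sup_right e1)
  have hr12 : r₁ = r₂ := by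
    have := (Submodule.orthogonal_disjoint (Submodule.span ℝ Bt ⊔ Submodule.span ℝ Ct)).le_bot
      ⟨hdiff, Submodule.sub_mem _ hr₁O hr₂O⟩
    rwa [Submodule.mem_bot, sub_eq_zero] at this
  -- the common projection p lies in span Bt ⊓ span Ct, hence in span D ⊓ (span D)ᗮ = 0
  set p : Eu d := resid (D : Set (Eu d)) a - r₁ with hp
  have hpCt : p ∈ Submodule.span ℝ Ct := sub_resid_mem _ _
  have hpBt : p ∈ Submodule.span ℝ Bt := by rw [hp, hr12]; exact sub_resid_mem _ _
  have hCt_le : Submodule.span ℝ Ct ≤ (Submodule.span ℝ (D : Set (Eu d)))ᗮ := by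
    rw [Submodule.span_le]; rintro _ ⟨c, _, rfl⟩; exact resid_mem_orthogonal _ _
  have htilde_le : ∀ (S : Finset (Eu d)),
      Submodule.span ℝ (resid (D : Set (Eu d)) '' (S : Set (Eu d))) ≤
        Submodule.span ℝ ((S : Set (Eu d)) ∪ (D : Set (Eu d))) := by
    intro S
    rw [Submodule.span_le]
    rintro _ ⟨s, hs, rfl⟩
    have h1 : s ∈ Submodule.span ℝ ((S : Set (Eu d)) ∪ (D : Set (Eu d))) :=
      Submodule.subset_span (Set.mem_union_left _ hs)
    have h2 : s - resid (D : Set (Eu d)) s ∈ Submodule.span ℝ ((S : Set (Eu d)) ∪ (D : Set (Eu d))) :=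
      Submodule.span_mono Set.subset_union_right (sub_resid_mem _ _)
    have : resid (D : Set (Eu d)) s = s - (s - resid (D : Set (Eu d)) s) := by abel
    rw [this]
    exact Submodule.sub_mem _ h1 h2
  -- disjointness of spans from linear independence
  have hdisj : Disjoint (Submodule.span ℝ (B : Set (Eu d)))
      (Submodule.span ℝ ((C : Set (Eu d)) ∪ (D : Set (Eu d)))) := by
    have := hV.disjoint_span_image (s := {y : {x // x ∈ V} | (y : Eu d) ∈ B})
      (t := {y : {x // x ∈ V} | (y : Eu d) ∈ C ∪ D}) (by
        rw [Set.disjoint_left]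
        rintro ⟨y, hyV⟩ hyB hyCD
        simp only [Set.mem_setOf_eq, Finset.mem_union] at hyB hyCD
        rcases hyCD with h | h
        · exact (Finset.disjoint_left.mp hBC) hyB h
        · exact (Finset.disjoint_left.mp hBD) hyB h)
    have him1 : (fun x : {x // x ∈ V} => (x : Eu d)) '' {y : {x // x ∈ V} | (y : Eu d) ∈ B}
        = (B : Set (Eu d)) := by
      ext y
      constructor
      · rintro ⟨⟨z, hz⟩, hzB, rfl⟩; exact hzB
      · intro hy; exact ⟨⟨y, hB hy⟩, hy, rfl⟩
    have him2 : (fun x : {x // x ∈ V} => (x : Eu d)) '' {y : {x // x ∈ V} | (y : Eu d) ∈ C ∪ D}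
        = ((C : Set (Eu d)) ∪ (D : Set (Eu d))) := by
      ext y
      constructor
      · rintro ⟨⟨z, hz⟩, hzCD, rfl⟩
        simpa [Finset.mem_union] using hzCD
      · rintro (hy | hy)
        · exact ⟨⟨y, hC hy⟩, Finset.mem_union.mpr (Or.inl hy), rfl⟩
        · exact ⟨⟨y, hD hy⟩, Finset.mem_union.mpr (Or.inr hy), rfl⟩
    rwa [him1, him2] at this
  have hpD : p ∈ Submodule.span ℝ (D : Set (Eu d)) := by
    have h1 : p ∈ Submodule.span ℝ ((B : Set (Eu d)) ∪ (D : Set (Eu d))) := htilde_le B hpBt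
    have h2 : p ∈ Submodule.span ℝ ((C : Set (Eu d)) ∪ (D : Set (Eu d))) := htilde_le C hpCt
    rw [Submodule.span_union, sup_comm] at h1
    have hDle : Submodule.span ℝ (D : Set (Eu d)) ≤
        Submodule.span ℝ ((C : Set (Eu d)) ∪ (D : Set (Eu d))) :=
      Submodule.span_mono Set.subset_union_right
    have hmod := sup_inf_assoc_of_le (Submodule.span ℝ (B : Set (Eu d))) hDle
    have : p ∈ (Submodule.span ℝ (D : Set (Eu d)) ⊔ Submodule.span ℝ (B : Set (Eu d))) ⊓
        Submodule.span ℝ ((C : Set (Eu d)) ∪ (D : Set (Eu d))) := ⟨h1, h2⟩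
    rw [hmod, disjoint_iff.mp hdisj, sup_bot_eq] at this
    exact this
  have hpzero : p = 0 := by
    have := (Submodule.orthogonal_disjoint (Submodule.span ℝ (D : Set (Eu d)))).le_bot
      ⟨hpD, hCt_le hpCt⟩
    rwa [Submodule.mem_bot] at this
  -- hence resid D a = r₁ is orthogonal to span (Bt ∪ Ct)
  have hra : resid (D : Set (Eu d)) a = r₁ := sub_eq_zero.mp hpzero
  have hxmem : resid (D : Set (Eu d)) x ∈ Submodule.span ℝ Bt ⊔ Submodule.span ℝ Ct := by
    rcases Finset.mem_union.mp hx with h | h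
    · exact Submodule.mem_sup_left (Submodule.subset_span ⟨x, h, rfl⟩)
    · exact Submodule.mem_sup_right (Submodule.subset_span ⟨x, h, rfl⟩)
  rw [hra]
  exact (Submodule.mem_orthogonal' _ _).1 hr₁O _ hxmem
end

section
/- Let V be a finite set of random variables with distribution P, let G_P be a minimal I-map (undirected graph) of P, and let ε be a perfect perturbation factor for G_P, so that A := (I + ε·Adj(G_P))^{-1} exists. Write the symmetric matrix A = U Σ Uᵀ (eigendecomposition) and define f(v_i) = U_i Σ^{1/2}. Then f is an independence preserving embedding map for P: every partial-orthogonality independence statement among the embeddings f(V) is a conditional independence statement of P. If moreover P is faithful to G_P, then the partial-orthogonality independencies of f(V) coincide exactly with the conditional independencies of P. -/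
open Matrix ProbabilityTheory MeasureTheory

/-- Conditional independence of `X i` and `X j` given the family `(X k)_{k ∈ S}`. -/
def CIgiven {Ω : Type*} [mΩ : MeasurableSpace Ω] [StandardBorelSpace Ω] {n : ℕ}
    (μ : Measure Ω) [IsFiniteMeasure μ] (X : Fin n → Ω → ℝ) (hX : ∀ k, Measurable (X k))
    (i j : Fin n) (S : Finset (Fin n)) : Prop :=
  CondIndepFun (⨆ k ∈ S, MeasurableSpace.comap (X k) inferInstance)
    (iSup₂_le fun k _ => (measurable_iff_comap_le.mp (hX k))) (X i) (X j) μ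

/-- `C` separates `a` and `b` in the graph `G`. -/
def gsep {V : Type*} (G : SimpleGraph V) (a b : V) (C : Finset V) : Prop :=
  ∀ p : G.Walk a b, ∃ c ∈ C, c ∈ p.support

lemma ipe_posDef_of_posSemidef_isUnit_det {n : ℕ} {A : Matrix (Fin n) (Fin n) ℝ}
    (h : A.PosSemidef) (hu : IsUnit A.det) : A.PosDef := by
  refine Matrix.posDef_iff_dotProduct_mulVec.mpr ⟨h.1, fun x hx => lt_of_le_of_ne (h.dotProduct_mulVec_nonneg x) (fun h0 => hx ?_)⟩
  have hz : A *ᵥ x = 0 := (h.dotProduct_mulVec_zero_iff x).mp h0.symm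
  have h2 : A⁻¹ *ᵥ (A *ᵥ x) = x := by
    rw [Matrix.mulVec_mulVec, Matrix.nonsing_inv_mul A hu, Matrix.one_mulVec]
  rw [hz, Matrix.mulVec_zero] at h2
  exact h2.symm

lemma ipe_posDef_submatrix {n : ℕ} {m : Type*} [Fintype m] [DecidableEq m]
    {A : Matrix (Fin n) (Fin n) ℝ} (hA : A.PosDef) (e : m → Fin n) (he : Function.Injective e) :
    (A.submatrix e e).PosDef := by
  refine Matrix.posDef_iff_dotProduct_mulVec.mpr ⟨hA.1.submatrix e, fun x hx => ?_⟩
  set y : Fin n → ℝ := fun i => ∑ j, if e j = i then x j else 0 with hy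
  have hye : ∀ j, y (e j) = x j := by
    intro j
    simp only [hy]
    rw [Finset.sum_eq_single j (fun b _ hb => by
      simp only [ite_eq_right_iff]; exact fun h => absurd (he h) hb) (by simp)]
    simp
  have hsum : ∀ g : Fin n → ℝ, (∑ i, y i * g i) = ∑ j, x j * g (e j) := by
    intro g
    simp only [hy, Finset.sum_mul]
    rw [Finset.sum_comm]
    refine Finset.sum_congr rfl fun j _ => ?_
    rw [Finset.sum_eq_single (e j) (fun b _ hb => by simp [Ne.symm hb]) (by simp)]
    simp
  have hxy : y ≠ 0 := by
    obtain ⟨j, hj⟩ := Function.ne_iff.mp hx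
    intro h0
    exact hj (by rw [← hye j, h0]; rfl)
  have hpos := hA.dotProduct_mulVec_pos hxy
  have heq : star y ⬝ᵥ A *ᵥ y = star x ⬝ᵥ (A.submatrix e e) *ᵥ x := by
    simp only [dotProduct, Pi.star_apply, star_trivial, mulVec, submatrix_apply]
    rw [hsum fun i => ∑ k, A i k * y k]
    refine Finset.sum_congr rfl fun j _ => ?_
    congr 1
    calc ∑ k, A (e j) k * y k = ∑ k, y k * A (e j) k := by simp [mul_comm]
      _ = ∑ l, x l * A (e j) (e l) := hsum _
      _ = ∑ l, A (e j) (e l) * x l := by simp [mul_comm]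
  rwa [heq] at hpos

lemma ipe_resid_inner_eq {n : ℕ} (A B : Matrix (Fin n) (Fin n) ℝ)
    (hA : A.PosDef) (hAB : A * B = 1)
    (f : Fin n → EuclideanSpace ℝ (Fin n))
    (hgram : ∀ i j, (inner ℝ (f i) (f j) : ℝ) = A i j)
    (S : Finset (Fin n)) (i j : Fin n) (hi : i ∈ Finset.univ \ S) (hj : j ∈ Finset.univ \ S) :
    (inner ℝ (resid (f '' (S : Set (Fin n))) (f i)) (resid (f '' (S : Set (Fin n))) (f j)) : ℝ)
      = ((B.submatrix (fun a : {x // x ∈ Finset.univ \ S} => (a : Fin n))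
          (fun a : {x // x ∈ Finset.univ \ S} => (a : Fin n)))⁻¹) ⟨i, hi⟩ ⟨j, hj⟩ := by
  classical
  set S' := {x // x ∈ S}
  set SS : Matrix S' S' ℝ := A.submatrix Subtype.val Subtype.val with hSSdef
  have hSS : SS.PosDef := ipe_posDef_submatrix hA _ Subtype.val_injective
  have hSSu : IsUnit SS.det := isUnit_iff_ne_zero.mpr hSS.det_pos.ne'
  set C : Matrix S' S' ℝ := SS⁻¹ with hCdef
  set bj : S' → ℝ := fun s => A s.1 j with hbjdef
  set cj : S' → ℝ := C *ᵥ bj with hcjdef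
  set u : EuclideanSpace ℝ (Fin n) := ∑ s : S', cj s • f s with hudef
  have hinner_u : ∀ a, (inner ℝ (f a) u : ℝ) = ∑ s : S', cj s * A a s.1 := by
    intro a
    rw [hudef, inner_sum]
    refine Finset.sum_congr rfl fun s _ => ?_
    rw [real_inner_smul_right, hgram]
  have hSScj : SS *ᵥ cj = bj := by
    rw [hcjdef, Matrix.mulVec_mulVec, Matrix.mul_nonsing_inv _ hSSu, Matrix.one_mulVec]
  have hgen : ∀ s : S', (inner ℝ (f s.1) (f j - u) : ℝ) = 0 := by
    intro s
    rw [inner_sub_right, hinner_u, hgram]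
    have h1 : ∑ t : S', cj t * A s.1 t.1 = (SS *ᵥ cj) s := by
      simp only [Matrix.mulVec, dotProduct, hSSdef, submatrix_apply]
      exact Finset.sum_congr rfl fun t _ => mul_comm _ _
    rw [h1, hSScj, hbjdef]
    ring
  have hKbot : f j - u ∈ (Submodule.span ℝ (f '' (S : Set (Fin n))))ᗮ := by
    rw [Submodule.mem_orthogonal]
    intro w hw
    refine Submodule.span_induction (p := fun w _ => (inner ℝ w (f j - u) : ℝ) = 0)
      ?_ (by simp)
      (fun a b _ _ ha hb => by
        show (inner ℝ (a + b) (f j - u) : ℝ) = 0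
        rw [inner_add_left, ha, hb, add_zero])
      (fun r a _ ha => by
        show (inner ℝ (r • a) (f j - u) : ℝ) = 0
        rw [real_inner_smul_left, ha, mul_zero]) hw
    rintro w ⟨a, haS, rfl⟩
    exact hgen ⟨a, haS⟩
  have hu : u ∈ Submodule.span ℝ (f '' (S : Set (Fin n))) := by
    rw [hudef]
    exact Submodule.sum_smul_mem _ _ fun s _ => Submodule.subset_span ⟨s.1, by simp, rfl⟩
  have hprojj : ((Submodule.span ℝ (f '' (S : Set (Fin n)))).orthogonalProjectionOnto (f j) :
      EuclideanSpace ℝ (Fin n)) = u :=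
    by rw [← Submodule.starProjection_apply]; exact Submodule.eq_starProjection_of_mem_orthogonal hu hKbot
  have hresj : resid (f '' (S : Set (Fin n))) (f j) = f j - u := by
    rw [resid, hprojj]
  have hLHS : (inner ℝ (resid (f '' (S : Set (Fin n))) (f i))
      (resid (f '' (S : Set (Fin n))) (f j)) : ℝ) = A i j - ∑ s : S', cj s * A i s.1 := by
    rw [hresj, resid, inner_sub_left]
    have hz : (inner ℝ (((Submodule.span ℝ (f '' (S : Set (Fin n)))).orthogonalProjectionOnto (f i)) :
        EuclideanSpace ℝ (Fin n)) (f j - u) : ℝ) = 0 :=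
      Submodule.inner_right_of_mem_orthogonal
        ((Submodule.span ℝ (f '' (S : Set (Fin n)))).orthogonalProjectionOnto (f i)).2 hKbot
    rw [hz, sub_zero, inner_sub_right, hinner_u, hgram]
  -- matrix side
  set I' := {x // x ∈ Finset.univ \ S}
  set BI : Matrix I' I' ℝ := B.submatrix Subtype.val Subtype.val with hBIdef
  set M : Matrix I' I' ℝ := fun p q => A p.1 q.1 -
    ∑ s : S', (C *ᵥ fun t : S' => A t.1 q.1) s * A p.1 s.1 with hMdef
  have hsplit : ∀ (g : Fin n → ℝ),
      (∑ k : I', g k.1) + (∑ t : S', g t.1) = ∑ k, g k := by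
    intro g
    rw [Finset.sum_coe_sort (Finset.univ \ S) g, Finset.sum_coe_sort S g]
    exact Finset.sum_sdiff (Finset.subset_univ S)
  have hMB : M * BI = 1 := by
    ext p q
    have hqS : (q : Fin n) ∉ S := (Finset.mem_sdiff.mp q.2).2
    have hrow : ∀ s : S', ∑ k, A s.1 k * B k q.1 = 0 := by
      intro s
      have h1 : (A * B) s.1 q.1 = (1 : Matrix (Fin n) (Fin n) ℝ) s.1 q.1 := by rw [hAB]
      rwa [Matrix.mul_apply, Matrix.one_apply_ne
        (fun h => hqS (by rw [← h]; exact s.2))] at h1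
    set w : S' → ℝ := fun t => ∑ k : I', A t.1 k.1 * B k.1 q.1 with hwdef
    have hw : w = -(SS *ᵥ fun t : S' => B t.1 q.1) := by
      funext t
      have h2 := hsplit (fun k => A t.1 k * B k q.1)
      rw [hrow t] at h2
      have h3 : (SS *ᵥ fun t : S' => B t.1 q.1) t = ∑ s : S', A t.1 s.1 * B s.1 q.1 := by
        simp only [Matrix.mulVec, dotProduct, hSSdef, submatrix_apply]
      simp only [Pi.neg_apply, h3, hwdef]
      linarith
    have hCw : ∀ s : S', (C *ᵥ w) s = -(B s.1 q.1) := by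
      intro s
      rw [hw, Matrix.mulVec_neg, Matrix.mulVec_mulVec, hCdef,
        Matrix.nonsing_inv_mul _ hSSu, Matrix.one_mulVec]
      rfl
    rw [Matrix.mul_apply]
    have expand : ∀ k : I', M p k * BI k q = A p.1 k.1 * B k.1 q.1 -
        ∑ s : S', ((∑ t : S', C s t * A t.1 k.1) * A p.1 s.1) * B k.1 q.1 := by
      intro k
      rw [hMdef, hBIdef]
      simp only [submatrix_apply, sub_mul, Finset.sum_mul, Matrix.mulVec, dotProduct]
    rw [Finset.sum_congr rfl fun k _ => expand k, Finset.sum_sub_distrib]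
    have h4 : ∀ s : S', (∑ k : I', ((∑ t : S', C s t * A t.1 k.1) * A p.1 s.1) * B k.1 q.1)
        = A p.1 s.1 * (C *ᵥ w) s := by
      intro s
      have hL : (∑ k : I', ((∑ t : S', C s t * A t.1 k.1) * A p.1 s.1) * B k.1 q.1)
          = ∑ t : S', ∑ k : I', A p.1 s.1 * C s t * (A t.1 k.1 * B k.1 q.1) := by
        rw [Finset.sum_comm]
        refine Finset.sum_congr rfl fun k _ => ?_
        rw [Finset.sum_mul, Finset.sum_mul]
        exact Finset.sum_congr rfl fun t _ => by ring
      have hR : A p.1 s.1 * (C *ᵥ w) s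
          = ∑ t : S', ∑ k : I', A p.1 s.1 * C s t * (A t.1 k.1 * B k.1 q.1) := by
        simp only [Matrix.mulVec, dotProduct, hwdef, Finset.mul_sum]
        exact Finset.sum_congr rfl fun t _ => Finset.sum_congr rfl fun k _ => by ring
      rw [hL, hR]
    have hsecond : (∑ k : I', ∑ s : S',
          ((∑ t : S', C s t * A t.1 k.1) * A p.1 s.1) * B k.1 q.1)
        = -∑ s : S', A p.1 s.1 * B s.1 q.1 := by
      rw [Finset.sum_comm, Finset.sum_congr rfl fun s _ => h4 s,
        Finset.sum_congr rfl fun s _ => by rw [hCw s]]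
      simp [mul_neg]
    rw [hsecond, sub_neg_eq_add, hsplit (fun k => A p.1 k * B k q.1)]
    have h5 : (A * B) p.1 q.1 = (1 : Matrix (Fin n) (Fin n) ℝ) p.1 q.1 := by rw [hAB]
    rw [Matrix.mul_apply] at h5
    rw [h5]
    by_cases hpq : p = q
    · subst hpq; simp
    · rw [Matrix.one_apply_ne (fun h : p.1 = q.1 => hpq (Subtype.ext h)),
        Matrix.one_apply_ne hpq]
  have hBIinv : ((B.submatrix (fun a : {x // x ∈ Finset.univ \ S} => (a : Fin n))
          (fun a : {x // x ∈ Finset.univ \ S} => (a : Fin n)))⁻¹) = M :=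
    Matrix.inv_eq_left_inv hMB
  rw [hBIinv, hLHS, hMdef]

/-- Construction of an independence preserving embedding map from a minimal I-map `G` of the
distribution of `X` and a perfect perturbation factor `ε`: with `A = (I + ε·Adj(G))⁻¹ = U D Uᵀ`
and `f i` the `i`-th row of `U D^{1/2}`, every partial-orthogonality statement among the
embeddings is a conditional independence of the distribution; and under faithfulness the two
independence models coincide. -/
theorem ipe_construction {Ω : Type*} [mΩ : MeasurableSpace Ω] [StandardBorelSpace Ω] [Nonempty Ω]
    {n : ℕ} (μ : Measure Ω) [IsProbabilityMeasure μ]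
    (X : Fin n → Ω → ℝ) (hX : ∀ k, Measurable (X k))
    (G : SimpleGraph (Fin n)) [DecidableRel G.Adj]
    -- `G` is an I-map of the distribution of `X`
    (hImap : ∀ (i j : Fin n) (S : Finset (Fin n)), i ≠ j → i ∉ S → j ∉ S →
      gsep G i j S → CIgiven μ X hX i j S)
    -- and it is a minimal I-map: no proper subgraph is an I-map
    (hMinimal : ∀ G' : SimpleGraph (Fin n), G' < G →
      ¬ (∀ (i j : Fin n) (S : Finset (Fin n)), i ≠ j → i ∉ S → j ∉ S →
        gsep G' i j S → CIgiven μ X hX i j S))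
    (ε : ℝ)
    -- `ε` is a perfect perturbation factor for `G`
    (hdet : IsUnit ((1 : Matrix (Fin n) (Fin n) ℝ) + ε • G.adjMatrix ℝ).det)
    (hperfect : ∀ (I : Finset (Fin n)) (i j : Fin n) (hi : i ∈ I) (hj : j ∈ I), i ≠ j →
      ((((1 : Matrix (Fin n) (Fin n) ℝ) + ε • G.adjMatrix ℝ).submatrix
          (fun a : {x // x ∈ I} => (a : Fin n)) (fun a : {x // x ∈ I} => (a : Fin n)))⁻¹
          ⟨i, hi⟩ ⟨j, hj⟩ = 0
        ↔ gsep G i j (Finset.univ \ I)))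
    -- eigendecomposition `A = U D Uᵀ` of `A = (I + ε·Adj(G))⁻¹`
    (U D : Matrix (Fin n) (Fin n) ℝ)
    (hU : U ∈ Matrix.orthogonalGroup (Fin n) ℝ) (hD : D.IsDiag) (hDpos : ∀ k, 0 ≤ D k k)
    (hdec : ((1 : Matrix (Fin n) (Fin n) ℝ) + ε • G.adjMatrix ℝ)⁻¹ = U * D * Uᵀ)
    -- the embedding map
    (f : Fin n → EuclideanSpace ℝ (Fin n))
    (hf : ∀ i k, f i k = U i k * Real.sqrt (D k k)) :
    -- `f` is an IPE map: partial orthogonality implies conditional independence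
    (∀ (i j : Fin n) (S : Finset (Fin n)), i ≠ j → i ∉ S → j ∉ S →
      (inner ℝ (resid (f '' (S : Set (Fin n))) (f i)) (resid (f '' (S : Set (Fin n))) (f j)) : ℝ) = 0 →
      CIgiven μ X hX i j S)
    -- and if `P` is faithful to `G`, then `f` is a faithful IPE map
    ∧ ((∀ (i j : Fin n) (S : Finset (Fin n)), i ≠ j → i ∉ S → j ∉ S →
        (gsep G i j S ↔ CIgiven μ X hX i j S)) →
      ∀ (i j : Fin n) (S : Finset (Fin n)), i ≠ j → i ∉ S → j ∉ S →
        ((inner ℝ (resid (f '' (S : Set (Fin n))) (f i))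
          (resid (f '' (S : Set (Fin n))) (f j)) : ℝ) = 0 ↔ CIgiven μ X hX i j S)) := by
  classical
  set B : Matrix (Fin n) (Fin n) ℝ := (1 : Matrix (Fin n) (Fin n) ℝ) + ε • G.adjMatrix ℝ with hBdef
  set A : Matrix (Fin n) (Fin n) ℝ := B⁻¹ with hAdef
  have hAB : A * B = 1 := Matrix.nonsing_inv_mul B hdet
  have hAu : IsUnit A.det :=
    IsUnit.of_mul_eq_one (a := A.det) B.det (by rw [← Matrix.det_mul, hAB, Matrix.det_one])
  have hDdiag : Matrix.diagonal D.diag = D := hD.diagonal_diag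
  have hApsd : A.PosSemidef := by
    rw [hdec, ← hDdiag, ← Matrix.conjTranspose_eq_transpose_of_trivial U]
    exact (Matrix.PosSemidef.diagonal (fun k => hDpos k)).mul_mul_conjTranspose_same U
  have hApd : A.PosDef := ipe_posDef_of_posSemidef_isUnit_det hApsd hAu
  have hgram : ∀ i j, (inner ℝ (f i) (f j) : ℝ) = A i j := by
    intro i j
    have hAij : A i j = ∑ k, U i k * D k k * U j k := by
      rw [hdec, ← hDdiag, Matrix.mul_apply]
      refine Finset.sum_congr rfl fun k _ => ?_
      simp [Matrix.mul_diagonal, Matrix.transpose_apply, Matrix.diag]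
    rw [hAij]
    simp only [PiLp.inner_apply, RCLike.inner_apply, conj_trivial]
    refine Finset.sum_congr rfl fun k _ => ?_
    rw [hf, hf]
    calc U j k * Real.sqrt (D k k) * (U i k * Real.sqrt (D k k))
        = U i k * U j k * (Real.sqrt (D k k) * Real.sqrt (D k k)) := by ring
      _ = U i k * D k k * U j k := by rw [Real.mul_self_sqrt (hDpos k)]; ring
  have hkey : ∀ (i j : Fin n) (S : Finset (Fin n)), i ≠ j → i ∉ S → j ∉ S →
      ((inner ℝ (resid (f '' (S : Set (Fin n))) (f i))
        (resid (f '' (S : Set (Fin n))) (f j)) : ℝ) = 0 ↔ gsep G i j S) := by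
    intro i j S hij hi hj
    have hi' : i ∈ Finset.univ \ S := Finset.mem_sdiff.mpr ⟨Finset.mem_univ _, hi⟩
    have hj' : j ∈ Finset.univ \ S := Finset.mem_sdiff.mpr ⟨Finset.mem_univ _, hj⟩
    have heq := ipe_resid_inner_eq A B hApd hAB f hgram S i j hi' hj'
    have hperf := hperfect (Finset.univ \ S) i j hi' hj' hij
    have hSd : Finset.univ \ (Finset.univ \ S) = S := by
      rw [Finset.sdiff_sdiff_self_left, Finset.univ_inter]
    rw [hSd] at hperf
    rw [heq]
    exact hperf
  exact ⟨fun i j S hij hi hj h0 => hImap i j S hij hi hj ((hkey i j S hij hi hj).mp h0),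
    fun hfaith i j S hij hi hj => (hkey i j S hij hi hj).trans (hfaith i j S hij hi hj)⟩
end
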